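/- Let P be a labeled poset on [p] and s : [p] → ℤ₊. For τ = (π,r) ∈ L(P,s) define τ* = (π₁*π₂*⋯π_p*, r*), where i* = p+1−i and r*(i*) = s(i) − 1 − r(i) for all i ∈ [p]. Then the map τ ↦ τ* is a bijection from L(P,s) onto L(P*,s*), and for every τ ∈ L(P,s) one has D₃(τ) = [p−1] \ D₁(τ*) and D₁(τ) = [p−1] \ D₃(τ*), where D₁(τ*) and D₃(τ*) are computed with respect to s*. -/

import Mathlib

open scoped Classical

noncomputable section

/-- `f : Fin p → ℕ` is a lecture hall `(P,s)`-partition: labels are compared via the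
usual order on `Fin p`. -/
def IsLHPart {p : ℕ} (P : PartialOrder (Fin p)) (s : Fin p → ℕ) (f : Fin p → ℕ) : Prop :=
  (∀ x y, P.lt x y → (f x : ℚ) / (s x : ℚ) ≤ (f y : ℚ) / (s y : ℚ)) ∧
  ∀ x y, P.lt x y → y < x → (f x : ℚ) / (s x : ℚ) < (f y : ℚ) / (s y : ℚ)

/-- The set of linear extensions (Jordan–Hölder set) of a labeled poset. -/
def LinExt {p : ℕ} (P : PartialOrder (Fin p)) : Set (Equiv.Perm (Fin p)) :=
  {π | ∀ i j, P.le (π i) (π j) → i ≤ j}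

/-- The set `L(P,s)` of `s`-colored permutations `(π, r)` with `π ∈ L(P)`. -/
def LPs {p : ℕ} (P : PartialOrder (Fin p)) (s : Fin p → ℕ) :
    Finset (Equiv.Perm (Fin p) × (∀ x : Fin p, Fin (s x))) :=
  Finset.univ.filter fun τ => τ.1 ∈ LinExt P

/-- Descent of `τ = (π,r)` at (1-based) position `i`. -/
def IsDesc {p : ℕ} (s : Fin p → ℕ) (π : Equiv.Perm (Fin p)) (r : Fin p → ℕ) (i : ℕ) : Prop :=
  ∃ (h1 : i - 1 < p) (h2 : i < p),
    ((π ⟨i - 1, h1⟩ < π ⟨i, h2⟩ ∧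
      (r (π ⟨i - 1, h1⟩) : ℚ) / (s (π ⟨i - 1, h1⟩) : ℚ) >
        (r (π ⟨i, h2⟩) : ℚ) / (s (π ⟨i, h2⟩) : ℚ)) ∨
    (π ⟨i, h2⟩ < π ⟨i - 1, h1⟩ ∧
      (r (π ⟨i - 1, h1⟩) : ℚ) / (s (π ⟨i - 1, h1⟩) : ℚ) ≥
        (r (π ⟨i, h2⟩) : ℚ) / (s (π ⟨i, h2⟩) : ℚ)))

/-- The descent set `D₁(τ) ⊆ [p-1]`. -/
def D1 {p : ℕ} (s : Fin p → ℕ) (π : Equiv.Perm (Fin p)) (r : Fin p → ℕ) : Finset ℕ :=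
  (Finset.Icc 1 (p - 1)).filter (IsDesc s π r)

/-- The descent set `D₃(τ)`: descents of `(π, r + 1)` (i.e. using `(r(x)+1)/s(x)`). -/
def D3 {p : ℕ} (s : Fin p → ℕ) (π : Equiv.Perm (Fin p)) (r : Fin p → ℕ) : Finset ℕ :=
  D1 s π fun x => r x + 1

/-- `D₂(τ) = D₁(τ) ∪ {0}` if `r(π₁) = 0`, else `D₁(τ)`. -/
def D2 {p : ℕ} (hp : 0 < p) (s : Fin p → ℕ) (π : Equiv.Perm (Fin p)) (r : Fin p → ℕ) :
    Finset ℕ :=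
  if r (π ⟨0, hp⟩) = 0 then insert 0 (D1 s π r) else D1 s π r

/-- `D(τ) = D₁(τ) ∪ {p}` if `r(π_p) > 0`, else `D₁(τ)`. -/
def Dfull {p : ℕ} (hp : 0 < p) (s : Fin p → ℕ) (π : Equiv.Perm (Fin p)) (r : Fin p → ℕ) :
    Finset ℕ :=
  if r (π ⟨p - 1, Nat.sub_lt hp Nat.one_pos⟩) = 0 then D1 s π r else insert p (D1 s π r)

/-- `D₄(τ) = D₂(τ) ∪ {p}` if `r(π_p) > 0`, else `D₂(τ)`. -/
def D4 {p : ℕ} (hp : 0 < p) (s : Fin p → ℕ) (π : Equiv.Perm (Fin p)) (r : Fin p → ℕ) :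
    Finset ℕ :=
  if r (π ⟨p - 1, Nat.sub_lt hp Nat.one_pos⟩) = 0 then D2 hp s π r
  else insert p (D2 hp s π r)

/-- The dual labeled poset `P*`: `i ⪯ j` in `P` iff `i* ⪯* j*` in `P*`, where
`i* = p + 1 - i` is realized by `Fin.rev`. -/
def dualOrder {p : ℕ} (P : PartialOrder (Fin p)) : PartialOrder (Fin p) where
  le a b := P.le a.rev b.rev
  lt a b := P.lt a.rev b.rev
  le_refl _ := P.le_refl _
  le_trans _ _ _ h1 h2 := P.le_trans _ _ _ h1 h2
  le_antisymm _ _ h1 h2 := Fin.rev_injective (P.le_antisymm _ _ h1 h2)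
  lt_iff_le_not_ge _ _ := P.lt_iff_le_not_ge _ _

/-- `L(P,s)` as a set of pairs `(π, r)` with `π` a linear extension of `P` and
`r : [p] → ℕ` with `r(x) < s(x)`. -/
def LPsSet {p : ℕ} (P : PartialOrder (Fin p)) (s : Fin p → ℕ) :
    Set (Equiv.Perm (Fin p) × (Fin p → ℕ)) :=
  {τ | τ.1 ∈ LinExt P ∧ ∀ x, τ.2 x < s x}

private lemma compl_iff {p : ℕ} {a b : Fin p} (hab : a ≠ b) (A B : ℚ) :
    ((a < b ∧ B < A) ∨ (b < a ∧ B ≤ A)) ↔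
      ¬((a.rev < b.rev ∧ (1-B) < (1-A)) ∨ (b.rev < a.rev ∧ (1-B) ≤ (1-A))) := by
  rw [Fin.rev_lt_rev, Fin.rev_lt_rev]
  rcases hab.lt_or_gt with h | h
  · constructor
    · rintro (⟨-, hBA⟩ | ⟨hc, -⟩)
      · rintro (⟨hc, -⟩ | ⟨-, hle⟩)
        · exact absurd hc h.asymm
        · linarith
      · exact absurd hc h.asymm
    · intro hn
      left
      refine ⟨h, ?_⟩
      by_contra hle
      exact hn (Or.inr ⟨h, by linarith⟩)
  · constructor
    · rintro (⟨hc, -⟩ | ⟨-, hBA⟩)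
      · exact absurd hc h.asymm
      · rintro (⟨-, hlt⟩ | ⟨hc, -⟩)
        · linarith
        · exact absurd hc h.asymm
    · intro hn
      right
      refine ⟨h, ?_⟩
      by_contra hlt
      exact hn (Or.inl ⟨h, by linarith⟩)

private lemma cast1 {sx rx : ℕ} (h : rx < sx) :
    ((sx - 1 - rx : ℕ) : ℚ) / sx = 1 - ((rx : ℚ) + 1) / sx := by
  have h1 : sx - 1 - rx = sx - (rx + 1) := by omega
  have h2 : ((sx - (rx+1) : ℕ) : ℚ) = (sx : ℚ) - (rx + 1) := by
    push_cast [Nat.cast_sub h]; ring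
  have hs : (0:ℚ) < sx := by exact_mod_cast Nat.pos_of_ne_zero (by omega)
  rw [h1, h2]
  field_simp

private lemma cast2 {sx rx : ℕ} (h : rx < sx) :
    (((sx - 1 - rx : ℕ) : ℚ) + 1) / sx = 1 - (rx : ℚ) / sx := by
  have h1 : ((sx - 1 - rx : ℕ) : ℚ) + 1 = ((sx - rx : ℕ) : ℚ) := by
    rw [Nat.cast_sub h.le]; rw [show sx - 1 - rx = sx - (rx+1) from by omega, Nat.cast_sub h]
    push_cast; ring
  have h2 : ((sx - rx : ℕ) : ℚ) = (sx : ℚ) - rx := Nat.cast_sub h.le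
  have hs : (0:ℚ) < sx := by exact_mod_cast Nat.pos_of_ne_zero (by omega)
  rw [h1, h2]
  field_simp

private lemma isDesc_iff {p : ℕ} (s : Fin p → ℕ) (π : Equiv.Perm (Fin p)) (r : Fin p → ℕ)
    {i : ℕ} (h1 : i - 1 < p) (h2 : i < p) :
    IsDesc s π r i ↔
      ((π ⟨i-1,h1⟩ < π ⟨i,h2⟩ ∧
        (r (π ⟨i,h2⟩) : ℚ)/(s (π ⟨i,h2⟩) : ℚ) < (r (π ⟨i-1,h1⟩) : ℚ)/(s (π ⟨i-1,h1⟩) : ℚ)) ∨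
       (π ⟨i,h2⟩ < π ⟨i-1,h1⟩ ∧
        (r (π ⟨i,h2⟩) : ℚ)/(s (π ⟨i,h2⟩) : ℚ) ≤ (r (π ⟨i-1,h1⟩) : ℚ)/(s (π ⟨i-1,h1⟩) : ℚ))) :=
  ⟨fun ⟨_,_,H⟩ => H, fun H => ⟨h1,h2,H⟩⟩

private lemma desc_dual3 {p : ℕ} (s : Fin p → ℕ)
    (π : Equiv.Perm (Fin p)) (r : Fin p → ℕ) (hr : ∀ x, r x < s x)
    {i : ℕ} (h1 : i - 1 < p) (h2 : i < p) (hi1 : 1 ≤ i) :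
    IsDesc s π (fun x => r x + 1) i ↔
      ¬ IsDesc (fun j => s (Fin.rev j)) (π.trans Fin.revPerm)
          (fun j => s (Fin.rev j) - 1 - r (Fin.rev j)) i := by
  have hab : π ⟨i-1,h1⟩ ≠ π ⟨i,h2⟩ := fun h => by
    have := π.injective h
    simp only [Fin.mk.injEq] at this
    omega
  rw [isDesc_iff _ _ _ h1 h2, isDesc_iff _ _ _ h1 h2]
  simp only [Equiv.trans_apply, Fin.revPerm_apply, Fin.rev_rev]
  push_cast
  rw [cast1 (hr (π ⟨i-1,h1⟩)), cast1 (hr (π ⟨i,h2⟩))]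
  exact compl_iff hab _ _

private lemma desc_dual1 {p : ℕ} (s : Fin p → ℕ)
    (π : Equiv.Perm (Fin p)) (r : Fin p → ℕ) (hr : ∀ x, r x < s x)
    {i : ℕ} (h1 : i - 1 < p) (h2 : i < p) (hi1 : 1 ≤ i) :
    IsDesc s π r i ↔
      ¬ IsDesc (fun j => s (Fin.rev j)) (π.trans Fin.revPerm)
          (fun x => (s (Fin.rev x) - 1 - r (Fin.rev x)) + 1) i := by
  have hab : π ⟨i-1,h1⟩ ≠ π ⟨i,h2⟩ := fun h => by
    have := π.injective h
    simp only [Fin.mk.injEq] at this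
    omega
  rw [isDesc_iff _ _ _ h1 h2, isDesc_iff _ _ _ h1 h2]
  simp only [Equiv.trans_apply, Fin.revPerm_apply, Fin.rev_rev]
  push_cast
  rw [cast2 (hr (π ⟨i-1,h1⟩)), cast2 (hr (π ⟨i,h2⟩))]
  exact compl_iff hab _ _

/-- `τ ↦ τ* = (π₁* ⋯ π_p*, r*)`, where `i* = p+1-i` (`Fin.rev`) and
`r*(i*) = s(i) - 1 - r(i)`, is a bijection `L(P,s) → L(P*,s*)`, and
`D₃(τ) = [p-1] \ D₁(τ*)`, `D₁(τ) = [p-1] \ D₃(τ*)` (descents of `τ*` computed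
with respect to `s*(i*) = s(i)`). -/
theorem dual_bijection_and_descent_complement {p : ℕ}
    (P : PartialOrder (Fin p)) (s : Fin p → ℕ) (hs : ∀ x, 0 < s x) :
    Set.BijOn
      (fun τ : Equiv.Perm (Fin p) × (Fin p → ℕ) =>
        (τ.1.trans Fin.revPerm, fun j => s (Fin.rev j) - 1 - τ.2 (Fin.rev j)))
      (LPsSet P s) (LPsSet (dualOrder P) fun j => s (Fin.rev j)) ∧
    ∀ τ ∈ LPsSet P s,
      D3 s τ.1 τ.2 =
        Finset.Icc 1 (p - 1) \
          D1 (fun j => s (Fin.rev j)) (τ.1.trans Fin.revPerm)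
            (fun j => s (Fin.rev j) - 1 - τ.2 (Fin.rev j)) ∧
      D1 s τ.1 τ.2 =
        Finset.Icc 1 (p - 1) \
          D3 (fun j => s (Fin.rev j)) (τ.1.trans Fin.revPerm)
            (fun j => s (Fin.rev j) - 1 - τ.2 (Fin.rev j)) := by
  constructor
  · refine ⟨?_, ?_, ?_⟩
    · rintro ⟨π, r⟩ ⟨hlin, hr⟩
      refine ⟨?_, ?_⟩
      · intro i j h
        apply hlin i j
        have h' : P.le ((π i).rev.rev) ((π j).rev.rev) := h
        rwa [Fin.rev_rev, Fin.rev_rev] at h'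
      · intro x
        show s (Fin.rev x) - 1 - r (Fin.rev x) < s (Fin.rev x)
        have h4 := hs (Fin.rev x)
        omega
    · rintro ⟨π, r⟩ ⟨-, hr⟩ ⟨σ, t⟩ ⟨-, ht⟩ h
      simp only [Prod.mk.injEq] at h
      obtain ⟨h1, h2⟩ := h
      refine Prod.ext ?_ ?_
      · ext i
        have hpi : π i = σ i := by
          have := congrArg (fun e : Equiv.Perm (Fin p) => Fin.rev (e i)) h1
          simpa [Fin.rev_rev] using this
        exact congrArg Fin.val hpi
      · funext x
        show r x = t x
        have h5 : s x - 1 - r x = s x - 1 - t x := by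
          have := congrFun h2 (Fin.rev x)
          simpa [Fin.rev_rev] using this
        have h3 : r x < s x := hr x
        have h4 : t x < s x := ht x
        omega
    · rintro ⟨σ, t⟩ ⟨hlin, ht⟩
      refine ⟨(σ.trans Fin.revPerm, fun x => s x - 1 - t (Fin.rev x)), ⟨?_, ?_⟩, ?_⟩
      · intro i j h
        exact hlin i j h
      · intro x
        show s x - 1 - t (Fin.rev x) < s x
        have := hs x
        omega
      · refine Prod.ext ?_ ?_
        · ext i
          simp [Fin.rev_rev]
        · funext j
          have h4 : t j < s (Fin.rev j) := ht j
          simp only [Equiv.trans_apply, Fin.revPerm_apply, Fin.rev_rev]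
          omega
  · rintro ⟨π, r⟩ ⟨hlin, hr⟩
    constructor
    · ext i
      simp only [D3, D1, Finset.mem_filter, Finset.mem_sdiff, Finset.mem_Icc]
      by_cases hi : 1 ≤ i ∧ i ≤ p - 1
      · obtain ⟨hi1, hi2⟩ := hi
        have h2 : i < p := by omega
        have h1 : i - 1 < p := by omega
        rw [desc_dual3 s π r hr h1 h2 hi1]
        tauto
      · tauto
    · ext i
      simp only [D3, D1, Finset.mem_filter, Finset.mem_sdiff, Finset.mem_Icc]
      by_cases hi : 1 ≤ i ∧ i ≤ p - 1
      · obtain ⟨hi1, hi2⟩ := hi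
        have h2 : i < p := by omega
        have h1 : i - 1 < p := by omega
        rw [desc_dual1 s π r hr h1 h2 hi1]
        tauto
      · tauto
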